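/- Let n ≥ 1, Δ ≥ 0, p ∈ [0,1]. Define ρ(p) = ∑_{k=0}^{n-1} (−1)^k · C(n−1,k) · ((1+Δ)/(k+1+Δ)) · p^{k+1} and ρ'(p) = p(1−p)^{n−1}(1 − p^Δ) + p^Δ·ρ(p). Then ρ'(p) ≤ ρ(p). -/

import Mathlib

open Finset Real

private lemma Snonneg : ∀ (m : ℕ) (c p : ℝ), 0 < c → 0 ≤ p → p ≤ 1 →
    0 ≤ ∑ j ∈ Finset.range (m+1), (-1:ℝ)^j * (m.choose j) * p^j / ((j:ℝ) + c) := by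
  intro m
  induction m with
  | zero =>
    intro c p hc hp0 hp1
    norm_num
    positivity
  | succ m ih =>
    intro c p hc hp0 hp1
    have hS' := ih (c+1) p (by linarith) hp0 hp1
    have hc0 : c ≠ 0 := ne_of_gt hc
    have hid : c * (∑ j ∈ Finset.range (m+1+1), (-1:ℝ)^j * ((m+1).choose j) * p^j / ((j:ℝ) + c))
        = (1-p)^(m+1) + ((m:ℝ)+1)*p * ∑ j ∈ Finset.range (m+1), (-1:ℝ)^j * (m.choose j) * p^j / ((j:ℝ) + (c+1)) := by
      have hpow : (1-p)^(m+1) = ∑ j ∈ Finset.range (m+1+1), (-1:ℝ)^j * ((m+1).choose j) * p^j := by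
        rw [show (1-p) = (-p) + 1 by ring, add_pow]
        refine Finset.sum_congr rfl fun j hj => ?_
        rw [neg_pow]
        ring
      rw [Finset.mul_sum, hpow, Finset.mul_sum]
      rw [Finset.sum_range_succ' (fun j => c * ((-1:ℝ)^j * ((m+1).choose j) * p^j / ((j:ℝ) + c))),
          Finset.sum_range_succ' (fun j => (-1:ℝ)^j * ((m+1).choose j) * p^j)]
      have hterm : ∀ k ∈ Finset.range (m+1),
          c * ((-1:ℝ) ^ (k + 1) * ((m + 1).choose (k + 1)) * p ^ (k + 1) / ((((k:ℕ) + 1 : ℕ):ℝ) + c)) =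
          (-1:ℝ) ^ (k + 1) * ((m + 1).choose (k + 1)) * p ^ (k + 1) +
            ((m:ℝ) + 1) * p * ((-1:ℝ) ^ k * (m.choose k) * p ^ k / ((k:ℝ) + (c + 1))) := by
        intro k _
        have hch : ((m:ℝ)+1) * (m.choose k) = ((m+1).choose (k+1) : ℝ) * ((k:ℝ)+1) := by
          exact_mod_cast congrArg (Nat.cast (R := ℝ)) (Nat.add_one_mul_choose_eq m k)
        have hne : (k:ℝ) + 1 + c ≠ 0 := by positivity
        push_cast
        set a := (((m+1).choose (k+1) : ℕ) : ℝ)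
        set b := ((m.choose k : ℕ) : ℝ)
        field_simp
        linear_combination (-(((k:ℝ)+1+c) * (-1:ℝ)^k * p^(k+1))) * hch
      rw [Finset.sum_congr rfl hterm, Finset.sum_add_distrib, ← Finset.mul_sum]
      push_cast
      have h0 : c * (1 / (0 + c)) = 1 := by field_simp; ring
      ring_nf
      ring_nf at h0 ⊢
      field_simp
      ring
    have hrhs : 0 ≤ (1-p)^(m+1) + ((m:ℝ)+1)*p * ∑ j ∈ Finset.range (m+1), (-1:ℝ)^j * (m.choose j) * p^j / ((j:ℝ) + (c+1)) := by
      have h1 : (0:ℝ) ≤ (1-p)^(m+1) := pow_nonneg (by linarith) _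
      have h2 : (0:ℝ) ≤ ((m:ℝ)+1)*p := by positivity
      nlinarith [mul_nonneg h2 hS']
    nlinarith [hid, hrhs, hc]

theorem stmt_10 (n : ℕ) (hn : 1 ≤ n) (Δ : ℝ) (hΔ : 0 ≤ Δ) (p : ℝ)
    (hp0 : 0 ≤ p) (hp1 : p ≤ 1) :
    p * (1 - p) ^ (n - 1) * (1 - p ^ Δ) +
        p ^ Δ * ∑ k ∈ Finset.range n,
          (-1 : ℝ) ^ k * (n - 1).choose k * ((1 + Δ) / (k + 1 + Δ)) * p ^ (k + 1) ≤
      ∑ k ∈ Finset.range n,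
        (-1 : ℝ) ^ k * (n - 1).choose k * ((1 + Δ) / (k + 1 + Δ)) * p ^ (k + 1) := by
  obtain ⟨m, rfl⟩ : ∃ m, n = m + 1 := ⟨n - 1, (Nat.succ_pred_eq_of_pos hn).symm⟩
  simp only [Nat.add_sub_cancel]
  have hΔ1 : (0:ℝ) < 1 + Δ := by linarith
  have hA : p * (1 - p) ^ m ≤ ∑ k ∈ Finset.range (m+1),
      (-1 : ℝ) ^ k * (m.choose k) * ((1 + Δ) / (k + 1 + Δ)) * p ^ (k + 1) := by
    have hpow : p * (1 - p) ^ m = ∑ k ∈ Finset.range (m+1),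
        (-1 : ℝ) ^ k * (m.choose k) * p ^ (k + 1) := by
      rw [show (1-p) = (-p) + 1 by ring, add_pow, Finset.mul_sum]
      refine Finset.sum_congr rfl fun j hj => ?_
      rw [neg_pow]
      ring
    rcases m with _ | l
    · simp
      rw [div_self (ne_of_gt hΔ1), one_mul]
    have hdiff : (∑ k ∈ Finset.range (l+1+1),
          (-1 : ℝ) ^ k * ((l+1).choose k) * ((1 + Δ) / (k + 1 + Δ)) * p ^ (k + 1))
        - p * (1 - p) ^ (l+1)
        = ((l:ℝ)+1) * p^2 * ∑ i ∈ Finset.range (l+1),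
            (-1:ℝ)^i * (l.choose i) * p^i / ((i:ℝ) + (2+Δ)) := by
      rw [hpow, ← Finset.sum_sub_distrib, Finset.mul_sum,
        Finset.sum_range_succ' (fun k => (-1 : ℝ) ^ k * ((l+1).choose k) * ((1 + Δ) / ((k:ℝ) + 1 + Δ)) * p ^ (k + 1)
          - (-1 : ℝ) ^ k * ((l+1).choose k) * p ^ (k + 1))]
      have h0 : (-1 : ℝ) ^ 0 * ((l+1).choose 0) * ((1 + Δ) / (((0:ℕ):ℝ) + 1 + Δ)) * p ^ (0 + 1)
          - (-1 : ℝ) ^ 0 * ((l+1).choose 0) * p ^ (0 + 1) = 0 := by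
        simp
        rw [div_self (by push_cast; linarith)]
        ring
      rw [h0, add_zero]
      refine Finset.sum_congr rfl fun k _ => ?_
      have hch : ((l:ℝ)+1) * (l.choose k) = ((l+1).choose (k+1) : ℝ) * ((k:ℝ)+1) := by
        exact_mod_cast congrArg (Nat.cast (R := ℝ)) (Nat.add_one_mul_choose_eq l k)
      have hne : (k:ℝ) + 2 + Δ ≠ 0 := by positivity
      push_cast
      set a := (((l+1).choose (k+1) : ℕ) : ℝ)
      set b := ((l.choose k : ℕ) : ℝ)
      field_simp
      ring_nf
      linear_combination (-(((k:ℝ)+2+Δ) * (-1:ℝ)^k * p^(k+2))) * hch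
    have hS := Snonneg l (2+Δ) p (by linarith) hp0 hp1
    nlinarith [mul_nonneg (mul_nonneg (by positivity : (0:ℝ) ≤ (l:ℝ)+1) (by positivity : (0:ℝ) ≤ p^2)) hS]
  have hq0 : (0:ℝ) ≤ p ^ Δ := Real.rpow_nonneg hp0 Δ
  have hq1 : p ^ Δ ≤ 1 := Real.rpow_le_one hp0 hp1 hΔ
  nlinarith [mul_le_mul_of_nonneg_left hA (by linarith : (0:ℝ) ≤ 1 - p ^ Δ)]
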